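/- Let σ ≥ 1, ρ₀ > 0, and for ρ with ρ₀/2 ≤ ρ ≤ ρ₀ define L_{ρ,m} = ρ^{m+1}(m+1)^{6+2σ}/(m!)^σ. Then there is a constant C > 0 such that for all m ∈ ℤ₊ and all k with 1 ≤ k ≤ ⌊m/2⌋, one has binom(m,k) · L_{ρ,m} / (L_{ρ,k} · L_{ρ,m-k+1} · (m-k+2)^{1/2} · (m+1)^{1/2}) ≤ C/(k+1)^6. -/

import Mathlib

/-- `L_{ρ,m} = ρ^{m+1} (m+1)^{6+2σ} / (m!)^σ`. -/
noncomputable def Lr (σ ρ : ℝ) (m : ℕ) : ℝ :=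
  ρ ^ (m + 1) * ((m : ℝ) + 1) ^ (6 + 2 * σ) / (Nat.factorial m : ℝ) ^ σ

private lemma le_choose_of_le_half (m : ℕ) : ∀ k : ℕ, 1 ≤ k → k ≤ m / 2 → m ≤ m.choose k := by
  intro k
  induction k with
  | zero => omega
  | succ j ih =>
    intro _ hk2
    rcases Nat.eq_zero_or_pos j with hj | hj
    · subst hj; simp
    · have h1 : j < m / 2 := by omega
      have h2 := Nat.choose_le_succ_of_lt_half_left h1
      have h3 := ih hj (by omega)
      omega

theorem binom_L_shift_bound_low (σ ρ₀ : ℝ) (hσ : 1 ≤ σ) (hρ₀ : 0 < ρ₀) :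
    ∃ C > 0, ∀ ρ : ℝ, ρ₀ / 2 ≤ ρ → ρ ≤ ρ₀ →
      ∀ m k : ℕ, 1 ≤ k → k ≤ m / 2 →
        (Nat.choose m k : ℝ) * Lr σ ρ m /
            (Lr σ ρ k * Lr σ ρ (m - k + 1) * Real.sqrt (((m - k : ℕ) : ℝ) + 2) *
              Real.sqrt ((m : ℝ) + 1)) ≤
          C / ((k : ℝ) + 1) ^ 6 := by
  refine ⟨2 ^ ((7:ℝ) + 3 * σ) / ρ₀ ^ 2, by positivity, ?_⟩
  intro ρ hρl hρu m k hk hk2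
  have hσ0 : (0:ℝ) ≤ σ := by linarith
  have hρ : 0 < ρ := lt_of_lt_of_le (by positivity) hρl
  have hkm : k ≤ m := le_trans hk2 (Nat.div_le_self m 2)
  have h2k : k * 2 ≤ m := (Nat.le_div_iff_mul_le (by norm_num)).mp hk2
  have hm2 : 2 ≤ m := by omega
  have hkR : (1:ℝ) ≤ (k:ℝ) := by exact_mod_cast hk
  have h2kR : (k:ℝ) * 2 ≤ (m:ℝ) := by exact_mod_cast h2k
  have hkmR : (k:ℝ) ≤ (m:ℝ) := by exact_mod_cast hkm
  -- notation
  set K : ℝ := (k:ℝ) + 1 with hKdef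
  set Mv : ℝ := (m:ℝ) + 1 with hMdef
  set Q : ℝ := (m:ℝ) - (k:ℝ) + 2 with hQdef
  have hKpos : 0 < K := by simp only [hKdef]; positivity
  have hMpos : 0 < Mv := by simp only [hMdef]; positivity
  have hQpos : 0 < Q := by simp only [hQdef]; linarith
  have hK1 : 1 ≤ K := by simp only [hKdef]; linarith
  have hQM : Q ≤ Mv := by simp only [hQdef, hMdef]; linarith
  have hM2Q : Mv ≤ 2 * Q := by simp only [hQdef, hMdef]; linarith
  -- cast facts
  have hcast1 : ((m - k : ℕ) : ℝ) = (m:ℝ) - (k:ℝ) := by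
    rw [Nat.cast_sub hkm]
  have hcast2 : ((m - k + 1 : ℕ) : ℝ) = (m:ℝ) - (k:ℝ) + 1 := by
    push_cast [Nat.cast_sub hkm]; ring
  -- abbreviations for factorials and choose
  set cm : ℝ := (Nat.choose m k : ℝ) with hcmdef
  set fk : ℝ := (Nat.factorial k : ℝ) with hfkdef
  set fn : ℝ := (Nat.factorial (m - k + 1) : ℝ) with hfndef
  set fm : ℝ := (Nat.factorial m : ℝ) with hfmdef
  have hcmpos : 0 < cm := by
    simp only [hcmdef]; exact_mod_cast Nat.choose_pos hkm
  have hcm1 : (1:ℝ) ≤ cm := by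
    simp only [hcmdef]; exact_mod_cast Nat.one_le_iff_ne_zero.mpr (Nat.choose_pos hkm).ne'
  have hmcm : (m:ℝ) ≤ cm := by
    simp only [hcmdef]; exact_mod_cast le_choose_of_le_half m k hk hk2
  have hQ2cm : Q ≤ 2 * cm := by
    have : (2:ℝ) ≤ (m:ℝ) := by exact_mod_cast hm2
    simp only [hQdef]; linarith
  have hfkpos : 0 < fk := by simp only [hfkdef]; exact_mod_cast Nat.factorial_pos _
  have hfnpos : 0 < fn := by simp only [hfndef]; exact_mod_cast Nat.factorial_pos _
  have hfmpos : 0 < fm := by simp only [hfmdef]; exact_mod_cast Nat.factorial_pos _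
  -- the factorial identity
  have hfactN : Nat.choose m k * (Nat.factorial k * Nat.factorial (m - k + 1))
      = (m - k + 1) * Nat.factorial m := by
    have h := Nat.choose_mul_factorial_mul_factorial hkm
    rw [Nat.factorial_succ, ← h]; ring
  have hfact : cm * (fk * fn) = ((m:ℝ) - k + 1) * fm := by
    have := congrArg (Nat.cast : ℕ → ℝ) hfactN
    push_cast [Nat.cast_sub hkm] at this
    simp only [hcmdef, hfkdef, hfndef, hfmdef]
    push_cast [Nat.cast_sub hkm]
    linarith
  have hmk1pos : (0:ℝ) < (m:ℝ) - k + 1 := by linarith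
  have hrs : cm ^ σ * (fk ^ σ * fn ^ σ) = ((m:ℝ) - k + 1) ^ σ * fm ^ σ := by
    rw [← Real.mul_rpow hfkpos.le hfnpos.le, ← Real.mul_rpow hcmpos.le (by positivity),
      hfact, Real.mul_rpow hmk1pos.le hfmpos.le]
  -- key per-factor bounds
  have h1 : cm * ((m:ℝ) - k + 1) ^ σ ≤ 2 ^ (σ - 1) * cm ^ σ * Q := by
    have ha : ((m:ℝ) - k + 1) ^ σ ≤ Q ^ σ :=
      Real.rpow_le_rpow hmk1pos.le (by simp only [hQdef]; linarith) hσ0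
    have hb : Q ^ σ = Q ^ (σ - 1) * Q := by
      rw [← Real.rpow_add_one hQpos.ne']; ring_nf
    have hcc : Q ^ (σ - 1) ≤ 2 ^ (σ - 1) * cm ^ (σ - 1) := by
      rw [← Real.mul_rpow (by norm_num) hcmpos.le]
      exact Real.rpow_le_rpow hQpos.le hQ2cm (by linarith)
    have hd : cm ^ (σ - 1) * cm = cm ^ σ := by
      rw [← Real.rpow_add_one hcmpos.ne']; ring_nf
    calc cm * ((m:ℝ) - k + 1) ^ σ ≤ cm * (Q ^ (σ - 1) * Q) := by
          rw [← hb]; exact mul_le_mul_of_nonneg_left ha hcmpos.le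
      _ ≤ cm * ((2 ^ (σ - 1) * cm ^ (σ - 1)) * Q) := by
          have := mul_le_mul_of_nonneg_right hcc hQpos.le
          exact mul_le_mul_of_nonneg_left this hcmpos.le
      _ = 2 ^ (σ - 1) * (cm ^ (σ - 1) * cm) * Q := by ring
      _ = 2 ^ (σ - 1) * cm ^ σ * Q := by rw [hd]
  have h2 : Mv ^ (6 + 2 * σ) ≤ 2 ^ (6 + 2 * σ) * Q ^ (6 + 2 * σ) := by
    rw [← Real.mul_rpow (by norm_num) hQpos.le]
    exact Real.rpow_le_rpow hMpos.le hM2Q (by linarith)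
  have h3 : K ^ (6:ℕ) ≤ K ^ (6 + 2 * σ) := by
    rw [← Real.rpow_natCast K 6]
    exact Real.rpow_le_rpow_of_exponent_le hK1 (by push_cast; linarith)
  have h4 : Q ≤ Real.sqrt Q * Real.sqrt Mv := by
    nth_rewrite 1 [← Real.mul_self_sqrt hQpos.le]
    exact mul_le_mul_of_nonneg_left (Real.sqrt_le_sqrt hQM) (Real.sqrt_nonneg _)
  -- constant comparison
  have hC2 : (2:ℝ) ^ ((5:ℝ) + 3 * σ) ≤ 2 ^ ((7:ℝ) + 3 * σ) / ρ₀ ^ 2 * ρ ^ 2 := by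
    have h47 : (2:ℝ) ^ ((7:ℝ) + 3 * σ) = 4 * 2 ^ ((5:ℝ) + 3 * σ) := by
      rw [show (7:ℝ) + 3 * σ = 2 + (5 + 3 * σ) by ring,
        Real.rpow_add (by norm_num : (0:ℝ) < 2)]
      norm_num
    have hρ2 : ρ₀ ^ 2 / 4 ≤ ρ ^ 2 := by
      have h := mul_le_mul hρl hρl (by positivity) hρ.le
      calc ρ₀ ^ 2 / 4 = ρ₀ / 2 * (ρ₀ / 2) := by ring
        _ ≤ ρ * ρ := h
        _ = ρ ^ 2 := by ring
    rw [h47]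
    have hpos : (0:ℝ) < 2 ^ ((5:ℝ) + 3 * σ) := Real.rpow_pos_of_pos (by norm_num) _
    calc (2:ℝ) ^ ((5:ℝ) + 3 * σ)
        = 4 * 2 ^ ((5:ℝ) + 3 * σ) / ρ₀ ^ 2 * (ρ₀ ^ 2 / 4) := by field_simp
      _ ≤ 4 * 2 ^ ((5:ℝ) + 3 * σ) / ρ₀ ^ 2 * ρ ^ 2 := by gcongr
  -- positivity of the various factors
  have hrpowpos : ∀ n : ℕ, (0:ℝ) < ρ ^ n := fun n => pow_pos hρ n
  have hKepos : 0 < K ^ (6 + 2 * σ) := Real.rpow_pos_of_pos hKpos _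
  have hMepos : 0 < Mv ^ (6 + 2 * σ) := Real.rpow_pos_of_pos hMpos _
  have hQepos : 0 < Q ^ (6 + 2 * σ) := Real.rpow_pos_of_pos hQpos _
  have hfkσ : 0 < fk ^ σ := Real.rpow_pos_of_pos hfkpos _
  have hfnσ : 0 < fn ^ σ := Real.rpow_pos_of_pos hfnpos _
  have hfmσ : 0 < fm ^ σ := Real.rpow_pos_of_pos hfmpos _
  have hcmσ : 0 < cm ^ σ := Real.rpow_pos_of_pos hcmpos _
  have hsQ : 0 < Real.sqrt Q := Real.sqrt_pos.mpr hQpos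
  have hsM : 0 < Real.sqrt Mv := Real.sqrt_pos.mpr hMpos
  -- CORE inequality
  have core : cm * Mv ^ (6 + 2 * σ) * K ^ (6:ℕ) * (fk ^ σ * fn ^ σ)
      ≤ 2 ^ ((5:ℝ) + 3 * σ) *
        (K ^ (6 + 2 * σ) * Q ^ (6 + 2 * σ) * (Real.sqrt Q * Real.sqrt Mv) * fm ^ σ) := by
    have key : cm ^ σ * (cm * Mv ^ (6 + 2 * σ) * K ^ (6:ℕ) * (fk ^ σ * fn ^ σ))
        ≤ cm ^ σ * (2 ^ ((5:ℝ) + 3 * σ) *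
          (K ^ (6 + 2 * σ) * Q ^ (6 + 2 * σ) * (Real.sqrt Q * Real.sqrt Mv) * fm ^ σ)) := by
      calc cm ^ σ * (cm * Mv ^ (6 + 2 * σ) * K ^ (6:ℕ) * (fk ^ σ * fn ^ σ))
          = (cm * ((m:ℝ) - k + 1) ^ σ) * Mv ^ (6 + 2 * σ) * K ^ (6:ℕ) * fm ^ σ := by
            linear_combination (cm * Mv ^ (6 + 2 * σ) * K ^ (6:ℕ)) * hrs
        _ ≤ (2 ^ (σ - 1) * cm ^ σ * Q) * (2 ^ (6 + 2 * σ) * Q ^ (6 + 2 * σ)) *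
              K ^ (6 + 2 * σ) * fm ^ σ := by
            have p1 : 0 ≤ cm * ((m:ℝ) - k + 1) ^ σ := by positivity
            have p2 : 0 ≤ 2 ^ (σ - 1) * cm ^ σ * Q := by positivity
            have p3 : 0 ≤ Mv ^ (6 + 2 * σ) := hMepos.le
            gcongr
        _ ≤ (2 ^ (σ - 1) * cm ^ σ * (Real.sqrt Q * Real.sqrt Mv)) *
              (2 ^ (6 + 2 * σ) * Q ^ (6 + 2 * σ)) * K ^ (6 + 2 * σ) * fm ^ σ := by
            gcongr
        _ = cm ^ σ * ((2 ^ (σ - 1) * 2 ^ (6 + 2 * σ)) *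
              (K ^ (6 + 2 * σ) * Q ^ (6 + 2 * σ) * (Real.sqrt Q * Real.sqrt Mv) * fm ^ σ)) := by
            ring
        _ = cm ^ σ * (2 ^ ((5:ℝ) + 3 * σ) *
              (K ^ (6 + 2 * σ) * Q ^ (6 + 2 * σ) * (Real.sqrt Q * Real.sqrt Mv) * fm ^ σ)) := by
            rw [← Real.rpow_add (by norm_num : (0:ℝ) < 2),
              show σ - 1 + (6 + 2 * σ) = (5:ℝ) + 3 * σ by ring]
    exact le_of_mul_le_mul_left key hcmσ
  -- now reduce the goal
  have hLk : Lr σ ρ k = ρ ^ (k + 1) * K ^ (6 + 2 * σ) / fk ^ σ := by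
    rw [hKdef, hfkdef, Lr]
  have hLm : Lr σ ρ m = ρ ^ (m + 1) * Mv ^ (6 + 2 * σ) / fm ^ σ := by
    rw [hMdef, hfmdef, Lr]
  have hLn : Lr σ ρ (m - k + 1) = ρ ^ (m - k + 1 + 1) * Q ^ (6 + 2 * σ) / fn ^ σ := by
    have hbase : ((m:ℝ) - (k:ℝ) + 1) + 1 = Q := by rw [hQdef]; ring
    rw [hfndef, Lr, hcast2, hbase]
  have hsqQ : Real.sqrt (((m - k : ℕ) : ℝ) + 2) = Real.sqrt Q := by
    rw [hcast1]
  have hDpos : 0 < Lr σ ρ k * Lr σ ρ (m - k + 1) * Real.sqrt (((m - k : ℕ) : ℝ) + 2) *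
      Real.sqrt ((m : ℝ) + 1) := by
    rw [hLk, hLn, hsqQ]
    positivity
  have hK6pos : (0:ℝ) < K ^ (6:ℕ) := by positivity
  rw [div_le_div_iff₀ hDpos hK6pos, hLk, hLm, hLn, hsqQ]
  -- clear denominators
  have hgoalL : cm * (ρ ^ (m + 1) * Mv ^ (6 + 2 * σ) / fm ^ σ) * K ^ (6:ℕ)
      = (cm * (ρ ^ (m + 1) * Mv ^ (6 + 2 * σ)) * K ^ (6:ℕ)) / fm ^ σ := by ring
  have hgoalR : 2 ^ ((7:ℝ) + 3 * σ) / ρ₀ ^ 2 *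
        (ρ ^ (k + 1) * K ^ (6 + 2 * σ) / fk ^ σ *
          (ρ ^ (m - k + 1 + 1) * Q ^ (6 + 2 * σ) / fn ^ σ) * Real.sqrt Q * Real.sqrt Mv)
      = (2 ^ ((7:ℝ) + 3 * σ) / ρ₀ ^ 2 * (ρ ^ (k + 1) * K ^ (6 + 2 * σ)) *
          (ρ ^ (m - k + 1 + 1) * Q ^ (6 + 2 * σ)) * Real.sqrt Q * Real.sqrt Mv) /
        (fk ^ σ * fn ^ σ) := by
    field_simp
  rw [hgoalL, hgoalR, div_le_div_iff₀ hfmσ (by positivity)]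
  have hρpow : ρ ^ (k + 1) * ρ ^ (m - k + 1 + 1) = ρ ^ (m + 1) * ρ ^ 2 := by
    rw [← pow_add, ← pow_add]; congr 1; omega
  calc cm * (ρ ^ (m + 1) * Mv ^ (6 + 2 * σ)) * K ^ (6:ℕ) * (fk ^ σ * fn ^ σ)
      = ρ ^ (m + 1) * (cm * Mv ^ (6 + 2 * σ) * K ^ (6:ℕ) * (fk ^ σ * fn ^ σ)) := by ring
    _ ≤ ρ ^ (m + 1) * (2 ^ ((5:ℝ) + 3 * σ) *
          (K ^ (6 + 2 * σ) * Q ^ (6 + 2 * σ) * (Real.sqrt Q * Real.sqrt Mv) * fm ^ σ)) := by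
        exact mul_le_mul_of_nonneg_left core (hrpowpos _).le
    _ ≤ ρ ^ (m + 1) * ((2 ^ ((7:ℝ) + 3 * σ) / ρ₀ ^ 2 * ρ ^ 2) *
          (K ^ (6 + 2 * σ) * Q ^ (6 + 2 * σ) * (Real.sqrt Q * Real.sqrt Mv) * fm ^ σ)) := by
        gcongr
    _ = 2 ^ ((7:ℝ) + 3 * σ) / ρ₀ ^ 2 * (ρ ^ (k + 1) * ρ ^ (m - k + 1 + 1)) *
          (K ^ (6 + 2 * σ) * Q ^ (6 + 2 * σ) * (Real.sqrt Q * Real.sqrt Mv) * fm ^ σ) := by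
        rw [hρpow]; ring
    _ = 2 ^ ((7:ℝ) + 3 * σ) / ρ₀ ^ 2 * (ρ ^ (k + 1) * K ^ (6 + 2 * σ)) *
          (ρ ^ (m - k + 1 + 1) * Q ^ (6 + 2 * σ)) * Real.sqrt Q * Real.sqrt Mv * fm ^ σ := by
        ring
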